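/- Let α, β, γ be C¹ functions on an interval (p₁,p₂) with α > 0, β ≥ 0, and let ε = ±1. Define F(p,f,π,ζ) = (f²−β(p))π² − α(p)(ζ²+1) and G(p,f,π,ζ) = f²(εf²+γ(p))²(ζ²+1) − 4α(p)(f²−β(p)), the open set U = {(p,z,f) ∈ ℝ³ : p₁ < p < p₂, f > √(β(p)), 0 < εf² + γ(p) < 2√(α(p))·√(f²−β(p))/f}, and the Jacobi bracket [F,G] = (F'_p + πF'_f)G'_π − (G'_p + πG'_f)F'_π + (F'_z + ζF'_f)G'_ζ − (G'_z + ζG'_f)F'_ζ. If U is nonempty, then the Jacobi bracket [F,G] is not identically zero on U × ℝ²; i.e., the system F = 0, G = 0 is never an involutory system. (Indeed, for fixed p, π ≠ 0, ζ, the quantity (1/4)[F,G] is a polynomial of degree 7 in f with leading coefficient −π²(2ζ²+3) ≠ 0.) -/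

import Mathlib

/-- `F(p,z,f,π,ζ) = (f²−β(p))π² − α(p)(ζ²+1)` (independent of `z`). -/
noncomputable def Ffun (α β : ℝ → ℝ) (p z f pi ζ : ℝ) : ℝ :=
  (f ^ 2 - β p) * pi ^ 2 - α p * (ζ ^ 2 + 1)

/-- `G(p,z,f,π,ζ) = f²(εf²+γ(p))²(ζ²+1) − 4α(p)(f²−β(p))` (independent of `z`). -/
noncomputable def Gfun (α β γ : ℝ → ℝ) (ε : ℝ) (p z f pi ζ : ℝ) : ℝ :=
  f ^ 2 * (ε * f ^ 2 + γ p) ^ 2 * (ζ ^ 2 + 1) - 4 * α p * (f ^ 2 - β p)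

/-- The Jacobi (Mayer) bracket
`[F,G] = (F'_p+πF'_f)G'_π − (G'_p+πG'_f)F'_π + (F'_z+ζF'_f)G'_ζ − (G'_z+ζG'_f)F'_ζ`
of two functions of `(p,z,f,π,ζ)`. -/
noncomputable def jacobiBracket (F G : ℝ → ℝ → ℝ → ℝ → ℝ → ℝ) (p z f pi ζ : ℝ) : ℝ :=
  (deriv (fun s => F s z f pi ζ) p + pi * deriv (fun s => F p z s pi ζ) f) *
      deriv (fun s => G p z f s ζ) pi
  - (deriv (fun s => G s z f pi ζ) p + pi * deriv (fun s => G p z s pi ζ) f) *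
      deriv (fun s => F p z f s ζ) pi
  + (deriv (fun s => F p s f pi ζ) z + ζ * deriv (fun s => F p z s pi ζ) f) *
      deriv (fun s => G p z f pi s) ζ
  - (deriv (fun s => G p s f pi ζ) z + ζ * deriv (fun s => G p z s pi ζ) f) *
      deriv (fun s => F p z f pi s) ζ

/-- The open set `U = {(p,z,f) : p₁<p<p₂, f>√β(p), 0<εf²+γ(p)<2√α(p)·√(f²−β(p))/f}`. -/
def Uset (α β γ : ℝ → ℝ) (ε p₁ p₂ : ℝ) : Set (ℝ × ℝ × ℝ) :=
  {v | p₁ < v.1 ∧ v.1 < p₂ ∧ Real.sqrt (β v.1) < v.2.2 ∧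
       0 < ε * v.2.2 ^ 2 + γ v.1 ∧
       ε * v.2.2 ^ 2 + γ v.1
         < 2 * Real.sqrt (α v.1) * Real.sqrt (v.2.2 ^ 2 - β v.1) / v.2.2}

/-- Explicit formula for the Jacobi bracket of `Ffun` and `Gfun`. -/
lemma bracket_eq (α β γ : ℝ → ℝ) (ε : ℝ) (p z f pi ζ : ℝ)
    (hα : DifferentiableAt ℝ α p) (hβ : DifferentiableAt ℝ β p)
    (hγ : DifferentiableAt ℝ γ p) :
    jacobiBracket (Ffun α β) (Gfun α β γ ε) p z f pi ζ =
      -((2 * f ^ 2 * (ε * f ^ 2 + γ p) * deriv γ p * (ζ ^ 2 + 1)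
          - 4 * deriv α p * (f ^ 2 - β p) + 4 * α p * deriv β p
          + pi * (2 * f * (ε * f ^ 2 + γ p) * ((ε * f ^ 2 + γ p) + 2 * ε * f ^ 2) * (ζ ^ 2 + 1)
              - 8 * α p * f))
          * (2 * (f ^ 2 - β p) * pi))
      + 4 * ζ ^ 2 * f ^ 3 * pi ^ 2 * (ε * f ^ 2 + γ p) ^ 2
      + 2 * α p * ζ ^ 2
          * (2 * f * (ε * f ^ 2 + γ p) * ((ε * f ^ 2 + γ p) + 2 * ε * f ^ 2) * (ζ ^ 2 + 1)
              - 8 * α p * f) := by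
  have hFp : HasDerivAt (fun s => (f ^ 2 - β s) * pi ^ 2 - α s * (ζ ^ 2 + 1))
      ((0 - deriv β p) * pi ^ 2 - deriv α p * (ζ ^ 2 + 1)) p :=
    (((hasDerivAt_const p (f ^ 2)).sub hβ.hasDerivAt).mul_const _).sub
      (hα.hasDerivAt.mul_const _)
  have hFf : HasDerivAt (fun s => (s ^ 2 - β p) * pi ^ 2 - α p * (ζ ^ 2 + 1))
      (((2:ℕ) * f ^ (2 - 1)) * pi ^ 2) f :=
    (((hasDerivAt_pow 2 f).sub_const (β p)).mul_const _).sub_const _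
  have hFpi : HasDerivAt (fun s => (f ^ 2 - β p) * s ^ 2 - α p * (ζ ^ 2 + 1))
      ((f ^ 2 - β p) * ((2:ℕ) * pi ^ (2 - 1))) pi :=
    (HasDerivAt.const_mul (f ^ 2 - β p) (hasDerivAt_pow 2 pi)).sub_const _
  have hFz : HasDerivAt (fun _ : ℝ => (f ^ 2 - β p) * pi ^ 2 - α p * (ζ ^ 2 + 1)) 0 z :=
    hasDerivAt_const z _
  have hFζ : HasDerivAt (fun s => (f ^ 2 - β p) * pi ^ 2 - α p * (s ^ 2 + 1))
      (0 - α p * ((2:ℕ) * ζ ^ (2 - 1))) ζ :=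
    (hasDerivAt_const ζ _).sub
      (HasDerivAt.const_mul (α p) ((hasDerivAt_pow 2 ζ).add_const 1))
  have hGp : HasDerivAt (fun s => f ^ 2 * (ε * f ^ 2 + γ s) ^ 2 * (ζ ^ 2 + 1)
        - 4 * α s * (f ^ 2 - β s))
      ((f ^ 2 * ((2:ℕ) * (ε * f ^ 2 + γ p) ^ (2 - 1) * (0 + deriv γ p))) * (ζ ^ 2 + 1)
        - ((4 * deriv α p) * (f ^ 2 - β p) + (4 * α p) * (0 - deriv β p))) p := by
    have h1 : HasDerivAt (fun s => f ^ 2 * (ε * f ^ 2 + γ s) ^ 2 * (ζ ^ 2 + 1))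
        ((f ^ 2 * ((2:ℕ) * (ε * f ^ 2 + γ p) ^ (2 - 1) * (0 + deriv γ p))) * (ζ ^ 2 + 1)) p :=
      (HasDerivAt.const_mul (f ^ 2)
        (((hasDerivAt_const p (ε * f ^ 2)).add hγ.hasDerivAt).pow 2)).mul_const _
    have h2 : HasDerivAt (fun s => 4 * α s * (f ^ 2 - β s))
        ((4 * deriv α p) * (f ^ 2 - β p) + (4 * α p) * (0 - deriv β p)) p :=
      (hα.hasDerivAt.const_mul 4).mul ((hasDerivAt_const p (f ^ 2)).sub hβ.hasDerivAt)
    exact h1.sub h2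
  have hGf : HasDerivAt (fun s => s ^ 2 * (ε * s ^ 2 + γ p) ^ 2 * (ζ ^ 2 + 1)
        - 4 * α p * (s ^ 2 - β p))
      ((((2:ℕ) * f ^ (2 - 1)) * (ε * f ^ 2 + γ p) ^ 2
          + f ^ 2 * ((2:ℕ) * (ε * f ^ 2 + γ p) ^ (2 - 1) * (ε * ((2:ℕ) * f ^ (2 - 1)))))
          * (ζ ^ 2 + 1)
        - (4 * α p) * ((2:ℕ) * f ^ (2 - 1))) f := by
    have h1 : HasDerivAt (fun s => s ^ 2 * (ε * s ^ 2 + γ p) ^ 2 * (ζ ^ 2 + 1))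
        ((((2:ℕ) * f ^ (2 - 1)) * (ε * f ^ 2 + γ p) ^ 2
          + f ^ 2 * ((2:ℕ) * (ε * f ^ 2 + γ p) ^ (2 - 1) * (ε * ((2:ℕ) * f ^ (2 - 1)))))
          * (ζ ^ 2 + 1)) f :=
      ((hasDerivAt_pow 2 f).mul
        ((((hasDerivAt_pow 2 f).const_mul ε).add_const (γ p)).pow 2)).mul_const _
    have h2 : HasDerivAt (fun s => 4 * α p * (s ^ 2 - β p))
        ((4 * α p) * ((2:ℕ) * f ^ (2 - 1))) f := by
      have := HasDerivAt.const_mul (4 * α p) ((hasDerivAt_pow 2 f).sub_const (β p))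
      simpa [mul_sub] using this
    exact h1.sub h2
  have hGpi : HasDerivAt (fun _ : ℝ => f ^ 2 * (ε * f ^ 2 + γ p) ^ 2 * (ζ ^ 2 + 1)
      - 4 * α p * (f ^ 2 - β p)) 0 pi := hasDerivAt_const pi _
  have hGz : HasDerivAt (fun _ : ℝ => f ^ 2 * (ε * f ^ 2 + γ p) ^ 2 * (ζ ^ 2 + 1)
      - 4 * α p * (f ^ 2 - β p)) 0 z := hasDerivAt_const z _
  have hGζ : HasDerivAt (fun s => f ^ 2 * (ε * f ^ 2 + γ p) ^ 2 * (s ^ 2 + 1)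
        - 4 * α p * (f ^ 2 - β p))
      ((f ^ 2 * (ε * f ^ 2 + γ p) ^ 2) * ((2:ℕ) * ζ ^ (2 - 1))) ζ :=
    (HasDerivAt.const_mul (f ^ 2 * (ε * f ^ 2 + γ p) ^ 2)
      ((hasDerivAt_pow 2 ζ).add_const 1)).sub_const _
  simp only [jacobiBracket, Ffun, Gfun]
  rw [hFp.deriv, hFf.deriv, hFpi.deriv, hFz.deriv, hFζ.deriv, hGp.deriv, hGf.deriv,
    hGpi.deriv, hGz.deriv, hGζ.deriv]
  push_cast
  ring

/-- Expansion of a `Fin 7` sum of monomials. -/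
lemma sum_univ_seven_mul_pow (c0 c1 c2 c3 c4 c5 c6 f : ℝ) :
    ∑ k : Fin 7, (![c0,c1,c2,c3,c4,c5,c6] : Fin 7 → ℝ) k * f ^ (k:ℕ)
      = c0 + c1 * f + c2 * f ^ 2 + c3 * f ^ 3 + c4 * f ^ 4 + c5 * f ^ 5 + c6 * f ^ 6 := by
  simp only [Fin.sum_univ_seven,
    show ((0:Fin 7):ℕ)=0 from rfl, show ((1:Fin 7):ℕ)=1 from rfl,
    show ((2:Fin 7):ℕ)=2 from rfl, show ((3:Fin 7):ℕ)=3 from rfl,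
    show ((4:Fin 7):ℕ)=4 from rfl, show ((5:Fin 7):ℕ)=5 from rfl,
    show ((6:Fin 7):ℕ)=6 from rfl,
    show (![c0,c1,c2,c3,c4,c5,c6] : Fin 7 → ℝ) 0 = c0 from rfl,
    show (![c0,c1,c2,c3,c4,c5,c6] : Fin 7 → ℝ) 1 = c1 from rfl,
    show (![c0,c1,c2,c3,c4,c5,c6] : Fin 7 → ℝ) 2 = c2 from rfl,
    show (![c0,c1,c2,c3,c4,c5,c6] : Fin 7 → ℝ) 3 = c3 from rfl,
    show (![c0,c1,c2,c3,c4,c5,c6] : Fin 7 → ℝ) 4 = c4 from rfl,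
    show (![c0,c1,c2,c3,c4,c5,c6] : Fin 7 → ℝ) 5 = c5 from rfl,
    show (![c0,c1,c2,c3,c4,c5,c6] : Fin 7 → ℝ) 6 = c6 from rfl]
  ring

/-- The algebraic contradiction at the heart of Theorem 7.1. -/
lemma aux_contradiction (A F2 f g Z : ℝ) (hA : 0 < A) (hf : 0 < f) (hF2 : 0 < F2)
    (h0 : -2 * F2 * (g - 8 * A * f) = 0)
    (h1 : (2 * A - 2 * F2) * (2 * g - 8 * A * f) + 4 * Z = 0)
    (h2 : (8 * A - 2 * F2) * (5 * g - 8 * A * f) + 16 * Z = 0) : False := by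
  have hg : g = 8 * A * f := by
    have h : F2 * (g - 8 * A * f) = 0 := by linarith
    rcases mul_eq_zero.mp h with h | h
    · exact absurd h hF2.ne'
    · linarith
  subst hg
  have h3 : (192 : ℝ) * A ^ 2 * f = 0 := by linear_combination h2 - 4 * h1
  have h4 : (0 : ℝ) < 192 * A ^ 2 * f := by positivity
  linarith

/-- Theorem 7.1: the system `F = 0`, `G = 0` is never involutory: if `U` is
nonempty then `[F,G]` does not vanish identically on `U × ℝ²`.  Indeed, for fixed `p`,
`π ≠ 0`, `ζ`, the quantity `(1/4)[F,G]` is a polynomial of degree `7` in `f` with leading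
coefficient `−π²(2ζ²+3) ≠ 0`. -/
theorem never_involutory (p₁ p₂ : ℝ) (α β γ : ℝ → ℝ)
    (ε : ℝ) (hε : ε = 1 ∨ ε = -1)
    (hα : ContDiffOn ℝ 1 α (Set.Ioo p₁ p₂)) (hβ : ContDiffOn ℝ 1 β (Set.Ioo p₁ p₂))
    (hγ : ContDiffOn ℝ 1 γ (Set.Ioo p₁ p₂))
    (hαpos : ∀ p ∈ Set.Ioo p₁ p₂, 0 < α p) (hβnn : ∀ p ∈ Set.Ioo p₁ p₂, 0 ≤ β p)
    (hne : (Uset α β γ ε p₁ p₂).Nonempty) :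
    (¬ ∀ v ∈ Uset α β γ ε p₁ p₂, ∀ pi ζ : ℝ,
        jacobiBracket (Ffun α β) (Gfun α β γ ε) v.1 v.2.1 v.2.2 pi ζ = 0) ∧
    (∀ p ∈ Set.Ioo p₁ p₂, ∀ pi ζ : ℝ, pi ≠ 0 →
      ∃ a : Fin 7 → ℝ, ∀ z f : ℝ,
        (1 / 4) * jacobiBracket (Ffun α β) (Gfun α β γ ε) p z f pi ζ
          = -(pi ^ 2 * (2 * ζ ^ 2 + 3)) * f ^ 7 + ∑ k : Fin 7, a k * f ^ (k : ℕ)) := by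
  constructor
  · -- part 1: the bracket does not vanish identically on `U × ℝ²`
    intro H
    obtain ⟨⟨p, z, f⟩, hv⟩ := hne
    have hv' := hv
    simp only [Uset, Set.mem_setOf_eq] at hv'
    obtain ⟨hp1, hp2, hf, hQ1, hQ2⟩ := hv'
    have hp : p ∈ Set.Ioo p₁ p₂ := ⟨hp1, hp2⟩
    have hdα : DifferentiableAt ℝ α p :=
      (hα.contDiffAt (isOpen_Ioo.mem_nhds hp)).differentiableAt one_ne_zero
    have hdβ : DifferentiableAt ℝ β p :=
      (hβ.contDiffAt (isOpen_Ioo.mem_nhds hp)).differentiableAt one_ne_zero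
    have hdγ : DifferentiableAt ℝ γ p :=
      (hγ.contDiffAt (isOpen_Ioo.mem_nhds hp)).differentiableAt one_ne_zero
    have hA : 0 < α p := hαpos p hp
    have hB : 0 ≤ β p := hβnn p hp
    have hf0 : 0 < f := (Real.sqrt_nonneg (β p)).trans_lt hf
    have hF2 : 0 < f ^ 2 - β p := by
      nlinarith [Real.sq_sqrt hB, Real.sqrt_nonneg (β p), hf]
    -- bracket values at `π = ±1`, `ζ = 0, 1, 2`
    have E : ∀ pi ζ : ℝ, jacobiBracket (Ffun α β) (Gfun α β γ ε) p z f pi ζ = 0 :=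
      fun pi ζ => H ⟨p, z, f⟩ hv pi ζ
    have e10 := E 1 0; have e20 := E (-1) 0
    have e11 := E 1 1; have e21 := E (-1) 1
    have e12 := E 1 2; have e22 := E (-1) 2
    rw [bracket_eq α β γ ε p z f _ _ hdα hdβ hdγ] at e10 e20 e11 e21 e12 e22
    set A := α p
    set g := 2 * f * (ε * f ^ 2 + γ p) * ((ε * f ^ 2 + γ p) + 2 * ε * f ^ 2) with hg
    set Z := f ^ 3 * (ε * f ^ 2 + γ p) ^ 2 with hZ
    have h0 : -2 * (f ^ 2 - β p) * (g - 8 * A * f) = 0 := by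
      rw [hg]; linear_combination (1 / 2 : ℝ) * e10 + (1 / 2 : ℝ) * e20
    have h1 : (2 * A - 2 * (f ^ 2 - β p)) * (2 * g - 8 * A * f) + 4 * Z = 0 := by
      rw [hg, hZ]; linear_combination (1 / 2 : ℝ) * e11 + (1 / 2 : ℝ) * e21
    have h2 : (8 * A - 2 * (f ^ 2 - β p)) * (5 * g - 8 * A * f) + 16 * Z = 0 := by
      rw [hg, hZ]; linear_combination (1 / 2 : ℝ) * e12 + (1 / 2 : ℝ) * e22
    exact aux_contradiction A (f ^ 2 - β p) f g Z hA hf0 hF2 h0 h1 h2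
  · -- part 2: explicit degree-7 polynomial in `f`
    intro p hp pi ζ hpi
    have hdα : DifferentiableAt ℝ α p :=
      (hα.contDiffAt (isOpen_Ioo.mem_nhds hp)).differentiableAt one_ne_zero
    have hdβ : DifferentiableAt ℝ β p :=
      (hβ.contDiffAt (isOpen_Ioo.mem_nhds hp)).differentiableAt one_ne_zero
    have hdγ : DifferentiableAt ℝ γ p :=
      (hγ.contDiffAt (isOpen_Ioo.mem_nhds hp)).differentiableAt one_ne_zero
    set A := α p with hA; set B := β p with hB; set C := γ p with hC
    set da := deriv α p with hda; set db := deriv β p with hdb; set dc := deriv γ p with hdc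
    refine ⟨![2 * B ^ 2 * da * pi + 2 * A * B * db * pi,
      B * C ^ 2 * pi ^ 2 + B * C ^ 2 * pi ^ 2 * ζ ^ 2 + A * C ^ 2 * ζ ^ 2
        + A * C ^ 2 * ζ ^ 4 - 4 * A * B * pi ^ 2 - 4 * A ^ 2 * ζ ^ 2,
      -4 * B * da * pi + B * C * dc * pi + B * C * dc * pi * ζ ^ 2 - 2 * A * db * pi,
      -(C ^ 2 * pi ^ 2) + 4 * B * C * pi ^ 2 * ε + 4 * B * C * pi ^ 2 * ζ ^ 2 * ε
        + 4 * A * pi ^ 2 + 4 * A * C * ζ ^ 2 * ε + 4 * A * C * ζ ^ 4 * ε,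
      2 * da * pi - C * dc * pi - C * dc * pi * ζ ^ 2 + B * dc * pi * ε
        + B * dc * pi * ζ ^ 2 * ε,
      -4 * C * pi ^ 2 * ε - 2 * C * pi ^ 2 * ζ ^ 2 * ε + 3 * B * pi ^ 2
        + 3 * B * pi ^ 2 * ζ ^ 2 + 3 * A * ζ ^ 2 + 3 * A * ζ ^ 4,
      -(dc * pi * ε) - dc * pi * ζ ^ 2 * ε], ?_⟩
    intro z f
    rw [bracket_eq α β γ ε p z f pi ζ hdα hdβ hdγ, sum_univ_seven_mul_pow]
    rcases hε with rfl | rfl <;> ring
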